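/- With the implication S₁ → S₂ defined via atoms and double pseudo-negation on 𝒫(R(H)), for all S₁, S₂, S₃ ⊆ R(H): S₁ → (S₂ ∩ S₃) = (S₁ → S₂) ∩ (S₁ → S₃). -/

import Mathlib

variable {H : Type*} [NormedAddCommGroup H] [InnerProductSpace ℂ H]

/-- The ray space: the set of one-dimensional subspaces (rays) of `H`. -/
def RaySp (H : Type*) [NormedAddCommGroup H] [InnerProductSpace ℂ H] :
    Set (Submodule ℂ H) :=
  {r | ∃ ψ : H, ψ ≠ 0 ∧ r = (ℂ ∙ ψ)}

/-- The set of rays contained in a subspace `K`. -/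
def rset (K : Submodule ℂ H) : Set (Submodule ℂ H) :=
  {r | ∃ ψ : H, ψ ≠ 0 ∧ ψ ∈ K ∧ r = (ℂ ∙ ψ)}

/-- The orthogonal pseudo-negation on sets of rays. -/
def pneg (S : Set (Submodule ℂ H)) : Set (Submodule ℂ H) :=
  {r | ∃ ψ : H, ψ ≠ 0 ∧ r = (ℂ ∙ ψ) ∧
    ∀ φ : H, φ ≠ 0 → (ℂ ∙ φ) ∈ S → (inner ℂ ψ φ : ℂ) = 0}

/-- `fset S` = the set of closed subspaces all of whose rays lie in `S`. -/
def fset (S : Set (Submodule ℂ H)) : Set (Submodule ℂ H) :=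
  {K | IsClosed (K : Set H) ∧ ∀ ψ : H, ψ ∈ K → ψ ≠ 0 → (ℂ ∙ ψ) ∈ S}

/-- `gset I` = the set of rays contained in some member of `I`. -/
def gset (I : Set (Submodule ℂ H)) : Set (Submodule ℂ H) :=
  {r | ∃ K ∈ I, ∃ ψ : H, ψ ≠ 0 ∧ ψ ∈ K ∧ r = (ℂ ∙ ψ)}

/-- A distributive ideal of the lattice of closed subspaces of `H`: a nonempty,
downward-closed set of closed subspaces, closed under joins that distribute over
all meets (joins of closed subspaces being closures of algebraic suprema). -/
def IsDistIdeal (I : Set (Submodule ℂ H)) : Prop :=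
  (∀ K ∈ I, IsClosed (K : Set H)) ∧ I.Nonempty ∧
  (∀ K ∈ I, ∀ K' : Submodule ℂ H, IsClosed (K' : Set H) → K' ≤ K → K' ∈ I) ∧
  (∀ 𝒦 ⊆ I, (∀ K' : Submodule ℂ H, IsClosed (K' : Set H) →
      (sSup 𝒦).topologicalClosure ⊓ K' = (⨆ K ∈ 𝒦, K ⊓ K').topologicalClosure) →
    (sSup 𝒦).topologicalClosure ∈ I)

open Classical in
/-- The weakly-Heyting implication on sets of rays, defined via atoms (singleton
ray sets) and double pseudo-negation. -/
noncomputable def himp' (S₁ S₂ : Set (Submodule ℂ H)) : Set (Submodule ℂ H) :=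
  if S₁ = ∅ then RaySp H
  else ⋂ r ∈ S₁, pneg (pneg (pneg {r} ∪ ({r} ∩ S₂)))

lemma pneg_subset_RaySp (S : Set (Submodule ℂ H)) : pneg S ⊆ RaySp H := by
  rintro r ⟨ψ, hψ, hr, _⟩
  exact ⟨ψ, hψ, hr⟩

lemma pneg_antitone {S T : Set (Submodule ℂ H)} (h : S ⊆ T) : pneg T ⊆ pneg S := by
  rintro r ⟨ψ, hψ, hr, hp⟩
  exact ⟨ψ, hψ, hr, fun φ hφ hφS => hp φ hφ (h hφS)⟩

lemma subset_pneg_pneg {S : Set (Submodule ℂ H)} (hS : S ⊆ RaySp H) :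
    S ⊆ pneg (pneg S) := by
  intro r hr
  obtain ⟨ψ, hψ, hrψ⟩ := hS hr
  refine ⟨ψ, hψ, hrψ, ?_⟩
  rintro φ hφ ⟨χ, hχ, hspan, hp⟩
  have hφmem : φ ∈ (ℂ ∙ χ : Submodule ℂ H) := by
    rw [← hspan]; exact Submodule.mem_span_singleton_self φ
  obtain ⟨c, rfl⟩ := Submodule.mem_span_singleton.mp hφmem
  have h0 : (inner ℂ χ ψ : ℂ) = 0 := hp ψ hψ (by rw [← hrψ]; exact hr)
  have h0' : (inner ℂ ψ χ : ℂ) = 0 := by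
    rw [← inner_conj_symm, h0]; simp
  rw [inner_smul_right, h0', mul_zero]

lemma pneg_pneg_pneg {S : Set (Submodule ℂ H)} (hS : S ⊆ RaySp H) :
    pneg (pneg (pneg S)) = pneg S :=
  Set.Subset.antisymm (pneg_antitone (subset_pneg_pneg hS))
    (subset_pneg_pneg (pneg_subset_RaySp _))

lemma himp_key (r : Submodule ℂ H) (hr : r ∈ RaySp H) (S₂ S₃ : Set (Submodule ℂ H)) :
    pneg (pneg (pneg {r} ∪ ({r} ∩ (S₂ ∩ S₃)))) =
    pneg (pneg (pneg {r} ∪ ({r} ∩ S₂))) ∩ pneg (pneg (pneg {r} ∪ ({r} ∩ S₃))) := by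
  have hrS : ({r} : Set (Submodule ℂ H)) ⊆ RaySp H := by
    intro x hx; rw [Set.mem_singleton_iff] at hx; rw [hx]; exact hr
  have hpr : pneg {r} ⊆ RaySp H := pneg_subset_RaySp _
  have hsub : pneg {r} ⊆ pneg (pneg (pneg {r} ∪ {r})) :=
    Set.subset_union_left.trans (subset_pneg_pneg (Set.union_subset hpr hrS))
  by_cases hs2 : r ∈ S₂ <;> by_cases hs3 : r ∈ S₃
  · rw [Set.inter_eq_left.mpr (Set.singleton_subset_iff.mpr (Set.mem_inter hs2 hs3)),
      Set.inter_eq_left.mpr (Set.singleton_subset_iff.mpr hs2),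
      Set.inter_eq_left.mpr (Set.singleton_subset_iff.mpr hs3), Set.inter_self]
  · rw [Set.inter_eq_left.mpr (Set.singleton_subset_iff.mpr hs2),
      Set.singleton_inter_eq_empty.mpr hs3,
      Set.singleton_inter_eq_empty.mpr (fun h => hs3 h.2),
      Set.union_empty, pneg_pneg_pneg hrS]
    exact (Set.inter_eq_right.mpr hsub).symm
  · rw [Set.inter_eq_left.mpr (Set.singleton_subset_iff.mpr hs3),
      Set.singleton_inter_eq_empty.mpr hs2,
      Set.singleton_inter_eq_empty.mpr (fun h => hs2 h.1),
      Set.union_empty, pneg_pneg_pneg hrS]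
    exact (Set.inter_eq_left.mpr hsub).symm
  · rw [Set.singleton_inter_eq_empty.mpr hs2,
      Set.singleton_inter_eq_empty.mpr hs3,
      Set.singleton_inter_eq_empty.mpr (fun h => hs2 h.1),
      Set.union_empty, Set.inter_self]

/-- The atomic implication distributes over meets in the consequent:
`S₁ → (S₂ ∩ S₃) = (S₁ → S₂) ∩ (S₁ → S₃)`. -/
theorem himp_inter_right [CompleteSpace H]
    (S₁ S₂ S₃ : Set (Submodule ℂ H))
    (h₁ : S₁ ⊆ RaySp H) (h₂ : S₂ ⊆ RaySp H) (h₃ : S₃ ⊆ RaySp H) :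
    himp' S₁ (S₂ ∩ S₃) = himp' S₁ S₂ ∩ himp' S₁ S₃ := by
  by_cases h : S₁ = ∅
  · simp [himp', h]
  · simp only [himp', if_neg h]
    ext x
    simp only [Set.mem_iInter, Set.mem_inter_iff]
    constructor
    · intro hx
      refine ⟨fun r hr => ?_, fun r hr => ?_⟩
      · exact ((himp_key r (h₁ hr) S₂ S₃) ▸ hx r hr).1
      · exact ((himp_key r (h₁ hr) S₂ S₃) ▸ hx r hr).2
    · rintro ⟨ha, hb⟩ r hr
      exact (himp_key r (h₁ hr) S₂ S₃).symm ▸ ⟨ha r hr, hb r hr⟩
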